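/- Let m ≥ 1 and n ≥ 1, and let H be the simple graph consisting of two vertex-disjoint paths A = a_0 a_1 ⋯ a_{m−1} and B = b_0 b_1 ⋯ b_{n−1}, together with the single additional edge a_0 b_0. Then in every conditional (3,2)-coloring c of H: all vertices a_{3i} (0 ≤ 3i ≤ m−1) receive the same color; all vertices b_{3j} (0 ≤ 3j ≤ n−1) receive the same color; and these two common colors are distinct. -/

import Mathlib

/-- A conditional `(k,r)`-coloring (with color type `α` of size `k`):
(C1) adjacent vertices get different colors, and
(C2) every vertex `v` sees at least `min (d v) r` distinct colors on its neighborhood. -/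
def IsCondColoring {V α : Type*} (G : SimpleGraph V) (r : ℕ) (c : V → α) : Prop :=
  (∀ ⦃u v : V⦄, G.Adj u v → c u ≠ c v) ∧
  ∀ v : V, min (G.neighborSet v).ncard r ≤ (c '' G.neighborSet v).ncard

/-- The `r`-th order conditional chromatic number `χ_r(G)`. -/
noncomputable def condChromaticNumber {V : Type*} (G : SimpleGraph V) (r : ℕ) : ℕ∞ :=
  ⨅ k ∈ {k : ℕ | ∃ c : V → Fin k, IsCondColoring G r c}, (k : ℕ∞)

/-- Two disjoint paths `a_0 ⋯ a_{m-1}` and `b_0 ⋯ b_{n-1}` joined by the single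
extra edge `a_0 b_0`. -/
def twoPathsJoined (m n : ℕ) : SimpleGraph (Fin m ⊕ Fin n) :=
  SimpleGraph.fromRel (fun a b =>
    match a, b with
    | Sum.inl i, Sum.inl j => (i : ℕ) + 1 = (j : ℕ)
    | Sum.inr i, Sum.inr j => (i : ℕ) + 1 = (j : ℕ)
    | Sum.inl i, Sum.inr j => (i : ℕ) = 0 ∧ (j : ℕ) = 0
    | Sum.inr _, Sum.inl _ => False)

lemma fin3_pigeon : ∀ x y z w : Fin 3, x ≠ y → y ≠ z → x ≠ z → w ≠ y → w ≠ z → w = x := by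
  intro x y z w hxy hyz hxz hwy hwz
  have hx := x.isLt; have hy := y.isLt; have hz := z.isLt; have hw := w.isLt
  simp only [Ne, Fin.ext_iff] at *
  omega

lemma key_ne {V α : Type*} (G : SimpleGraph V) (c : V → α) (hc : IsCondColoring G 2 c)
    {v u w : V} (huw : u ≠ w) (hN : G.neighborSet v = {u, w}) : c u ≠ c w := by
  intro h
  have h2 := hc.2 v
  rw [hN, Set.ncard_pair huw, Set.image_pair, ← h, Set.pair_eq_singleton,
    Set.ncard_singleton] at h2
  omega

lemma adjA (m n k : ℕ) (hk : k + 1 < m) :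
    (twoPathsJoined m n).Adj (Sum.inl ⟨k, by omega⟩) (Sum.inl ⟨k + 1, hk⟩) := by
  simp [twoPathsJoined, SimpleGraph.fromRel_adj, Fin.ext_iff]

lemma adjB (m n k : ℕ) (hk : k + 1 < n) :
    (twoPathsJoined m n).Adj (Sum.inr ⟨k, by omega⟩) (Sum.inr ⟨k + 1, hk⟩) := by
  simp [twoPathsJoined, SimpleGraph.fromRel_adj, Fin.ext_iff]

lemma adjAB (m n : ℕ) (hm : 1 ≤ m) (hn : 1 ≤ n) :
    (twoPathsJoined m n).Adj (Sum.inl ⟨0, hm⟩) (Sum.inr ⟨0, hn⟩) := by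
  simp [twoPathsJoined, SimpleGraph.fromRel_adj]

lemma nbrA (m n k : ℕ) (h2 : k + 2 < m) :
    (twoPathsJoined m n).neighborSet (Sum.inl ⟨k + 1, by omega⟩) =
      {Sum.inl ⟨k, by omega⟩, Sum.inl ⟨k + 2, by omega⟩} := by
  ext x
  cases x with
  | inl j =>
    simp [twoPathsJoined, SimpleGraph.fromRel_adj, Fin.ext_iff]
    omega
  | inr j =>
    simp [twoPathsJoined, SimpleGraph.fromRel_adj]

lemma nbrB (m n k : ℕ) (h2 : k + 2 < n) :
    (twoPathsJoined m n).neighborSet (Sum.inr ⟨k + 1, by omega⟩) =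
      {Sum.inr ⟨k, by omega⟩, Sum.inr ⟨k + 2, by omega⟩} := by
  ext x
  cases x with
  | inr j =>
    simp [twoPathsJoined, SimpleGraph.fromRel_adj, Fin.ext_iff]
    omega
  | inl j =>
    simp [twoPathsJoined, SimpleGraph.fromRel_adj]

lemma stepA (m n : ℕ) (c : Fin m ⊕ Fin n → Fin 3)
    (hc : IsCondColoring (twoPathsJoined m n) 2 c) (k : ℕ) (hk : k + 3 < m) :
    c (Sum.inl ⟨k + 3, hk⟩) = c (Sum.inl ⟨k, by omega⟩) := by
  have h01 := hc.1 (adjA m n k (by omega))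
  have h12 := hc.1 (adjA m n (k + 1) (by omega))
  have h23 := hc.1 (adjA m n (k + 2) (by omega))
  have h02 : c (Sum.inl ⟨k, by omega⟩) ≠ c (Sum.inl ⟨k + 2, by omega⟩) :=
    key_ne _ c hc (by simp [Fin.ext_iff]) (nbrA m n k (by omega))
  have h13 : c (Sum.inl ⟨k + 1, by omega⟩) ≠ c (Sum.inl ⟨k + 3, by omega⟩) :=
    key_ne _ c hc (by simp [Fin.ext_iff]) (nbrA m n (k + 1) (by omega))
  exact fin3_pigeon _ _ _ _ h01 h12 h02 (Ne.symm h13) (Ne.symm h23)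

lemma stepB (m n : ℕ) (c : Fin m ⊕ Fin n → Fin 3)
    (hc : IsCondColoring (twoPathsJoined m n) 2 c) (k : ℕ) (hk : k + 3 < n) :
    c (Sum.inr ⟨k + 3, hk⟩) = c (Sum.inr ⟨k, by omega⟩) := by
  have h01 := hc.1 (adjB m n k (by omega))
  have h12 := hc.1 (adjB m n (k + 1) (by omega))
  have h23 := hc.1 (adjB m n (k + 2) (by omega))
  have h02 : c (Sum.inr ⟨k, by omega⟩) ≠ c (Sum.inr ⟨k + 2, by omega⟩) :=
    key_ne _ c hc (by simp [Fin.ext_iff]) (nbrB m n k (by omega))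
  have h13 : c (Sum.inr ⟨k + 1, by omega⟩) ≠ c (Sum.inr ⟨k + 3, by omega⟩) :=
    key_ne _ c hc (by simp [Fin.ext_iff]) (nbrB m n (k + 1) (by omega))
  exact fin3_pigeon _ _ _ _ h01 h12 h02 (Ne.symm h13) (Ne.symm h23)

lemma mainA (m n : ℕ) (c : Fin m ⊕ Fin n → Fin 3)
    (hc : IsCondColoring (twoPathsJoined m n) 2 c) :
    ∀ i : ℕ, ∀ hi : 3 * i < m, c (Sum.inl ⟨3 * i, hi⟩) = c (Sum.inl ⟨0, by omega⟩) := by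
  intro i
  induction i with
  | zero => intro hi; rfl
  | succ i ih =>
    intro hi
    have h3 : 3 * i + 3 < m := by omega
    have e1 : c (Sum.inl ⟨3 * (i + 1), hi⟩) = c (Sum.inl ⟨3 * i + 3, h3⟩) := by
      rfl
    rw [e1, stepA m n c hc (3 * i) h3, ih (by omega)]

lemma mainB (m n : ℕ) (c : Fin m ⊕ Fin n → Fin 3)
    (hc : IsCondColoring (twoPathsJoined m n) 2 c) :
    ∀ j : ℕ, ∀ hj : 3 * j < n, c (Sum.inr ⟨3 * j, hj⟩) = c (Sum.inr ⟨0, by omega⟩) := by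
  intro j
  induction j with
  | zero => intro hj; rfl
  | succ j ih =>
    intro hj
    have h3 : 3 * j + 3 < n := by omega
    have e1 : c (Sum.inr ⟨3 * (j + 1), hj⟩) = c (Sum.inr ⟨3 * j + 3, h3⟩) := by
      rfl
    rw [e1, stepB m n c hc (3 * j) h3, ih (by omega)]

/-- In every conditional `(3,2)`-coloring of `H`: all `a_{3i}` get one common color,
all `b_{3j}` get one common color, and these two colors are distinct. -/
theorem stmt_11 (m n : ℕ) (hm : 1 ≤ m) (hn : 1 ≤ n)
    (c : Fin m ⊕ Fin n → Fin 3)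
    (hc : IsCondColoring (twoPathsJoined m n) 2 c) :
    (∀ i i' : ℕ, ∀ (hi : 3 * i < m) (hi' : 3 * i' < m),
      c (Sum.inl ⟨3 * i, hi⟩) = c (Sum.inl ⟨3 * i', hi'⟩)) ∧
    (∀ j j' : ℕ, ∀ (hj : 3 * j < n) (hj' : 3 * j' < n),
      c (Sum.inr ⟨3 * j, hj⟩) = c (Sum.inr ⟨3 * j', hj'⟩)) ∧
    c (Sum.inl ⟨0, by omega⟩) ≠ c (Sum.inr ⟨0, by omega⟩) := by
  refine ⟨fun i i' hi hi' => ?_, fun j j' hj hj' => ?_, hc.1 (adjAB m n hm hn)⟩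
  · rw [mainA m n c hc i hi, mainA m n c hc i' hi']
  · rw [mainB m n c hc j hj, mainB m n c hc j' hj']
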